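/- Let v: [a, b] → ℝ be continuous, strictly increasing, concave, and differentiable on (a, b). Then for every integer K ≥ 1 there exists a K-piece piecewise-linear outer approximation h = min_{s=1..K} h_s of v on [a, b] such that each piece h_s is tangent to v and the gaps h(B_s) - v(B_s) are equal at B_1 = a, all break points B_2 < … < B_K, and B_{K+1} = b. -/

import Mathlib

open Set

noncomputable def slp (v : ℝ → ℝ) (α β : ℝ) : ℝ := (v β - v α)/(β - α)
noncomputable def chd (v : ℝ → ℝ) (α β y : ℝ) : ℝ := v α + slp v α β * (y - α)
noncomputable def cgap (v : ℝ → ℝ) (α β : ℝ) : ℝ :=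
  sSup ((fun y => v y - chd v α β y) '' Set.Icc α β)

section basic
variable {a b : ℝ} {v : ℝ → ℝ}

lemma chd_left (α β : ℝ) : chd v α β α = v α := by simp [chd]

lemma chd_right {α β : ℝ} (h : α < β) : chd v α β β = v β := by
  have : (β : ℝ) - α ≠ 0 := by linarith
  rw [chd, slp, div_mul_cancel₀ _ this]; ring

lemma v_le (hmono : StrictMonoOn v (Set.Icc a b)) {x y : ℝ}
    (ha : a ≤ x) (hb : y ≤ b) (h : x ≤ y) : v x ≤ v y :=
  hmono.monotoneOn ⟨ha, le_trans h hb⟩ ⟨le_trans ha h, hb⟩ h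

lemma slp_nonneg (hmono : StrictMonoOn v (Set.Icc a b)) {α β : ℝ}
    (ha : a ≤ α) (hb : β ≤ b) (h : α < β) : 0 ≤ slp v α β := by
  have h1 : v α ≤ v β := le_of_lt (hmono ⟨ha, by linarith⟩ ⟨by linarith, hb⟩ h)
  have : (0:ℝ) < β - α := by linarith
  exact div_nonneg (by linarith) (by linarith)

/-- concavity: chord lies below the function -/
lemma chd_le_v (hconc : ConcaveOn ℝ (Set.Icc a b) v) {α β y : ℝ}
    (ha : a ≤ α) (hb : β ≤ b) (h : α < β) (hy : y ∈ Set.Icc α β) :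
    chd v α β y ≤ v y := by
  obtain ⟨hy1, hy2⟩ := hy
  have hβα : (0:ℝ) < β - α := by linarith
  have h1 : ((β - y)/(β - α)) • v α + ((y - α)/(β - α)) • v β ≤
      v (((β - y)/(β - α)) • α + ((y - α)/(β - α)) • β) := by
    apply hconc.2 ⟨ha, by linarith⟩ ⟨by linarith, hb⟩
    · exact div_nonneg (by linarith) (by linarith)
    · exact div_nonneg (by linarith) (by linarith)
    · field_simp; ring
  have he : ((β - y)/(β - α)) • α + ((y - α)/(β - α)) • β = y := by
    simp only [smul_eq_mul]; rw [div_mul_eq_mul_div, div_mul_eq_mul_div, ← add_div, div_eq_iff hβα.ne']; ring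
  rw [he] at h1
  have : chd v α β y = ((β - y)/(β - α)) * v α + ((y - α)/(β - α)) * v β := by
    rw [chd, slp, div_mul_eq_mul_div, div_mul_eq_mul_div, div_mul_eq_mul_div, ← add_div, eq_div_iff hβα.ne', add_mul, div_mul_cancel₀ _ hβα.ne']; ring
  rw [this]
  simpa [smul_eq_mul] using h1

lemma cgap_bddAbove (hcont : ContinuousOn v (Set.Icc a b)) {α β : ℝ}
    (ha : a ≤ α) (hb : β ≤ b) (h : α ≤ β) :
    BddAbove ((fun y => v y - chd v α β y) '' Set.Icc α β) := by
  apply IsCompact.bddAbove_image isCompact_Icc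
  apply ContinuousOn.sub
  · exact hcont.mono (Set.Icc_subset_Icc ha hb)
  · exact (continuous_const.add (continuous_const.mul (continuous_id.sub continuous_const))).continuousOn

lemma cgap_nonneg (hcont : ContinuousOn v (Set.Icc a b)) {α β : ℝ}
    (ha : a ≤ α) (hb : β ≤ b) (h : α ≤ β) : 0 ≤ cgap v α β := by
  have h0 : (0:ℝ) ∈ (fun y => v y - chd v α β y) '' Set.Icc α β :=
    ⟨α, ⟨le_refl _, h⟩, by simp [chd]⟩
  exact le_csSup (cgap_bddAbove hcont ha hb h) h0

lemma cgap_empty {α β : ℝ} (h : β < α) : cgap v α β = 0 := by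
  rw [cgap, Set.Icc_eq_empty (by exact fun hc => absurd hc (not_le.2 h)), Set.image_empty,
    Real.sSup_empty]

lemma cgap_self (α : ℝ) : cgap v α α = 0 := by
  rw [cgap]
  rw [Set.Icc_self, Set.image_singleton]
  simp [chd]

/-- elements of the defining set are at most cgap -/
lemma le_cgap (hcont : ContinuousOn v (Set.Icc a b)) {α β y : ℝ}
    (ha : a ≤ α) (hb : β ≤ b) (hy : y ∈ Set.Icc α β) :
    v y - chd v α β y ≤ cgap v α β :=
  le_csSup (cgap_bddAbove hcont ha hb (le_trans hy.1 hy.2)) ⟨y, hy, rfl⟩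

lemma cgap_le {α β M : ℝ} (h : α ≤ β)
    (hM : ∀ y ∈ Set.Icc α β, v y - chd v α β y ≤ M) : cgap v α β ≤ M := by
  apply csSup_le (Set.Nonempty.image _ (Set.nonempty_Icc.2 h))
  rintro x ⟨y, hy, rfl⟩
  exact hM y hy

lemma cgap_le_sub (hcont : ContinuousOn v (Set.Icc a b))
    (hmono : StrictMonoOn v (Set.Icc a b)) {α β : ℝ}
    (ha : a ≤ α) (hb : β ≤ b) (h : α ≤ β) : cgap v α β ≤ v β - v α := by
  rcases eq_or_lt_of_le h with rfl | hlt
  · rw [cgap_self]; simp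
  apply cgap_le h
  intro y hy
  have hvy : v y ≤ v β := v_le hmono (le_trans ha hy.1) hb hy.2
  have hchd : v α ≤ chd v α β y := by
    have h1 := slp_nonneg (a := a) (b := b) hmono ha hb hlt
    have h2 : 0 ≤ slp v α β * (y - α) := mul_nonneg h1 (by linarith [hy.1])
    simp only [chd]; linarith
  linarith

end basic

section mod
variable {a b : ℝ} {v : ℝ → ℝ}

lemma chd_rt {α β y : ℝ} (h : α < β) :
    chd v α β y = v β + slp v α β * (y - β) := by
  have h1 : chd v α β β = v β := chd_right h
  simp only [chd] at h1 ⊢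
  linear_combination h1

lemma slp_mul {α β : ℝ} (h : α < β) : slp v α β * (β - α) = v β - v α := by
  have : (β : ℝ) - α ≠ 0 := by linarith
  rw [slp, div_mul_cancel₀ _ this]

/-- cgap is antitone in the left endpoint -/
lemma cgap_anti_left (hcont : ContinuousOn v (Set.Icc a b))
    (hconc : ConcaveOn ℝ (Set.Icc a b) v) {α α' β : ℝ}
    (ha : a ≤ α) (h1 : α ≤ α') (h2 : α ≤ β) (hb : β ≤ b) :
    cgap v α' β ≤ cgap v α β := by
  rcases lt_or_ge β α' with hc | hc
  · rw [cgap_empty hc]; exact cgap_nonneg hcont ha hb h2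
  rcases eq_or_lt_of_le h1 with rfl | h1'
  · exact le_refl _
  rcases eq_or_lt_of_le hc with rfl | hc'
  · rw [cgap_self]; exact cgap_nonneg hcont ha hb h2
  -- now α < α' < β
  have hαβ : α < β := lt_trans h1' hc'
  have hs : slp v α' β ≤ slp v α β := by
    have hv : chd v α β α' ≤ v α' :=
      chd_le_v hconc ha hb hαβ ⟨le_of_lt h1', le_of_lt hc'⟩
    rw [chd_rt hαβ] at hv
    have hmul : slp v α' β * (β - α') = v β - v α' := slp_mul hc'
    nlinarith [hv, hmul]
  apply cgap_le (le_of_lt hc')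
  intro y hy
  have hch : chd v α β y ≤ chd v α' β y := by
    rw [chd_rt hαβ, chd_rt hc']
    nlinarith [hy.2, hs]
  have := le_cgap hcont ha hb (y := y) ⟨le_trans (le_of_lt h1') hy.1, hy.2⟩
  linarith

/-- cgap is monotone in the right endpoint -/
lemma cgap_mono_right (hcont : ContinuousOn v (Set.Icc a b))
    (hconc : ConcaveOn ℝ (Set.Icc a b) v) {α β β' : ℝ}
    (ha : a ≤ α) (h1 : α ≤ β) (h2 : β ≤ β') (hb : β' ≤ b) :
    cgap v α β ≤ cgap v α β' := by
  rcases eq_or_lt_of_le h1 with rfl | h1'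
  · rw [cgap_self]; exact cgap_nonneg hcont ha hb h2
  rcases eq_or_lt_of_le h2 with rfl | h2'
  · exact le_refl _
  have hαβ' : α < β' := lt_trans h1' h2'
  have hs : slp v α β' ≤ slp v α β := by
    have hv : chd v α β' β ≤ v β :=
      chd_le_v hconc ha hb hαβ' ⟨le_of_lt h1', le_of_lt h2'⟩
    simp only [chd] at hv
    have hmul : slp v α β * (β - α) = v β - v α := slp_mul h1'
    nlinarith [hv, hmul]
  apply cgap_le (le_of_lt h1')
  intro y hy
  have hch : chd v α β' y ≤ chd v α β y := by
    simp only [chd]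
    nlinarith [hy.1, hs]
  have := le_cgap hcont ha hb (y := y) ⟨hy.1, le_trans hy.2 (le_of_lt h2')⟩
  linarith

/-- shrinking from the left costs at most the increment of v -/
lemma cgap_left_mod (hcont : ContinuousOn v (Set.Icc a b))
    (hmono : StrictMonoOn v (Set.Icc a b))
    (hconc : ConcaveOn ℝ (Set.Icc a b) v) {α α' β : ℝ}
    (ha : a ≤ α) (h1 : α ≤ α') (h2 : α' ≤ β) (hb : β ≤ b) :
    cgap v α β ≤ cgap v α' β + (v α' - v α) := by
  rcases eq_or_lt_of_le h1 with rfl | h1'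
  · simp
  rcases eq_or_lt_of_le h2 with rfl | h2'
  · rw [cgap_self]
    have := cgap_le_sub hcont hmono ha hb (le_of_lt h1')
    linarith
  have hαβ : α < β := lt_trans h1' h2'
  have hs0 : 0 ≤ slp v α β := slp_nonneg hmono ha hb hαβ
  have hd_right : chd v α β α' ≥ v α := by
    simp only [chd]
    nlinarith [hs0]
  apply cgap_le (le_of_lt hαβ)
  intro y hy
  rcases le_total y α' with hy' | hy'
  · -- y ∈ [α, α']
    have hvy : v y ≤ v α' := v_le hmono (le_trans ha hy.1) (by linarith) hy'
    have hcy : v α ≤ chd v α β y := by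
      simp only [chd]; nlinarith [hy.1, hs0]
    have hnn : 0 ≤ cgap v α' β := cgap_nonneg hcont (by linarith) hb h2
    linarith
  · -- y ∈ [α', β]
    have hgap := le_cgap hcont (a := a) (b := b) (by linarith) hb (y := y) ⟨hy', hy.2⟩
    -- bound chd v α' β y - chd v α β y ≤ v α' - v α
    have hd : chd v α' β y - chd v α β y ≤ v α' - v α := by
      rw [chd_rt hαβ, chd_rt h2']
      rcases le_total (slp v α β) (slp v α' β) with hss | hss
      · -- difference is (s2 - s1)(y - β) ≤ 0
        have hm : v α ≤ v α' := v_le hmono ha (by linarith) (le_of_lt h1')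
        nlinarith [hy.2]
      · -- difference maximized at y = α'
        have hv : chd v α β α' ≥ v α := hd_right
        rw [chd_rt hαβ] at hv
        have he : v β + slp v α' β * (α' - β) = v α' := by
          rw [← chd_rt h2']; exact chd_left α' β
        nlinarith [hv, he, mul_nonneg (sub_nonneg.2 hss) (sub_nonneg.2 hy')]
    linarith

/-- stretching the right endpoint costs at most slp * length -/
lemma cgap_right_mod (hcont : ContinuousOn v (Set.Icc a b))
    (hmono : StrictMonoOn v (Set.Icc a b))
    (hconc : ConcaveOn ℝ (Set.Icc a b) v) {α y y' : ℝ}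
    (ha : a ≤ α) (h1 : α ≤ y) (h2 : y ≤ y') (hy' : α < y') (hb : y' ≤ b) :
    cgap v α y' ≤ cgap v α y + slp v α y' * (y' - y) := by
  have hs'0 : 0 ≤ slp v α y' := slp_nonneg hmono ha hb hy'
  have hsm' : slp v α y' * (y' - α) = v y' - v α := slp_mul hy'
  rcases eq_or_lt_of_le h1 with rfl | h1'
  · -- α = y : cgap α y = 0, and cgap α y' ≤ v y' - v α = slp * (y' - α)
    rw [cgap_self]
    have := cgap_le_sub hcont hmono ha hb (le_of_lt hy')
    linarith
  have hs0 : 0 ≤ slp v α y := slp_nonneg hmono ha (by linarith) h1'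
  have hsm : slp v α y * (y - α) = v y - v α := slp_mul h1'
  apply cgap_le (le_of_lt hy')
  intro z hz
  rcases le_total z y with hzy | hzy
  · -- z ∈ [α, y]
    have hgap := le_cgap hcont (a := a) (b := b) ha (by linarith) (y := z) ⟨hz.1, hzy⟩
    have hd : chd v α y z - chd v α y' z ≤ slp v α y' * (y' - y) := by
      simp only [chd]
      rcases le_total (slp v α y) (slp v α y') with hss | hss
      · nlinarith [hz.1]
      · -- max at z = y : v y - chd v α y' y ≤ slp' * (y' - y) follows from v y ≤ v y'
        have hvy : v y ≤ v y' := v_le hmono (by linarith) hb h2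
        nlinarith [hz.1, hzy]
    linarith
  · -- z ∈ [y, y']
    have hvz : v z ≤ v y' := v_le hmono (by linarith [hz.1]) hb hz.2
    have hnn : 0 ≤ cgap v α y := cgap_nonneg hcont ha (by linarith) (le_of_lt h1')
    have : v z - chd v α y' z ≤ slp v α y' * (y' - y) := by
      simp only [chd]
      nlinarith [hzy, hz.2]
    linarith

/-- subintervals of a zero-gap interval have zero gap -/
lemma cgap_zero_sub (hcont : ContinuousOn v (Set.Icc a b))
    (hconc : ConcaveOn ℝ (Set.Icc a b) v) {α α' β' β : ℝ}
    (ha : a ≤ α) (h1 : α ≤ α') (h2 : α' ≤ β') (h3 : β' ≤ β) (hb : β ≤ b)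
    (h0 : cgap v α β = 0) : cgap v α' β' = 0 := by
  have l1 : cgap v α' β' ≤ cgap v α' β :=
    cgap_mono_right hcont hconc (by linarith) h2 h3 hb
  have l2 : cgap v α' β ≤ cgap v α β :=
    cgap_anti_left hcont hconc ha h1 (by linarith) hb
  have l3 : 0 ≤ cgap v α' β' := cgap_nonneg hcont (by linarith) (by linarith) h2
  linarith

end mod

/-- equal-gap strict partition of [x, b] into K pieces -/
def EP (v : ℝ → ℝ) (b : ℝ) (K : ℕ) (x c : ℝ) : Prop :=
  ∃ B : ℕ → ℝ, B 0 = x ∧ B K = b ∧ (∀ i, i < K → B i < B (i + 1)) ∧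
    (∀ i, i < K → cgap v (B i) (B (i + 1)) = c)

section part
variable {a b : ℝ} {v : ℝ → ℝ}

lemma part_mono {B : ℕ → ℝ} {K : ℕ} (h : ∀ i, i < K → B i ≤ B (i + 1)) :
    ∀ i j, i ≤ j → j ≤ K → B i ≤ B j := by
  intro i j hij hjK
  induction j with
  | zero => simp_all
  | succ n ih =>
    rcases Nat.lt_or_ge i (n + 1) with hc | hc
    · exact le_trans (ih (by omega) (by omega)) (h n (by omega))
    · have : i = n + 1 := by omega
      simp [this]

lemma part_bounds {B : ℕ → ℝ} {K : ℕ} {x : ℝ} (hB0 : B 0 = x) (hBK : B K = b)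
    (h : ∀ i, i < K → B i ≤ B (i + 1)) :
    ∀ i, i ≤ K → x ≤ B i ∧ B i ≤ b := by
  intro i hi
  constructor
  · rw [← hB0]; exact part_mono h 0 i (Nat.zero_le _) hi
  · rw [← hBK]; exact part_mono h i K hi (le_refl _)

/-- optimality: no partition can have all gaps strictly below an equal-gap value -/
lemma EP_opt (hcont : ContinuousOn v (Set.Icc a b))
    (hconc : ConcaveOn ℝ (Set.Icc a b) v) {K : ℕ} {x c : ℝ}
    (hK : 1 ≤ K) (hxa : a ≤ x)
    (B : ℕ → ℝ) (hB0 : B 0 = x) (hBK : B K = b)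
    (hBm : ∀ i, i < K → B i ≤ B (i + 1)) (hBc : ∀ i, i < K → cgap v (B i) (B (i + 1)) = c)
    (D : ℕ → ℝ) (hD0 : D 0 = x) (hDK : D K = b)
    (hDm : ∀ i, i < K → D i ≤ D (i + 1))
    (hlt : ∀ i, i < K → cgap v (D i) (D (i + 1)) < c) : False := by
  have hBb := part_bounds (b := b) hB0 hBK hBm
  have hDb := part_bounds (b := b) hD0 hDK hDm
  have claim : ∀ i, i ≤ K → D i ≤ B i ∧ (1 ≤ i → D i < B i) := by
    intro i hi
    induction i with
    | zero => exact ⟨by rw [hB0, hD0], by omega⟩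
    | succ n ih =>
      have hn := ih (by omega)
      have hnK : n < K := by omega
      have haD : a ≤ D n := le_trans hxa (hDb n (by omega)).1
      have key : cgap v (B n) (D (n + 1)) ≤ cgap v (D n) (D (n + 1)) :=
        cgap_anti_left hcont hconc haD hn.1 (hDm n hnK) (hDb (n+1) (by omega)).2
      have hlt' : cgap v (B n) (D (n + 1)) < c := lt_of_le_of_lt key (hlt n hnK)
      have hres : D (n + 1) < B (n + 1) := by
        by_contra hcc
        push_neg at hcc
        have : cgap v (B n) (B (n + 1)) ≤ cgap v (B n) (D (n + 1)) :=
          cgap_mono_right hcont hconc (le_trans hxa (hBb n (by omega)).1)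
            (hBm n hnK) hcc (hDb (n+1) (by omega)).2
        rw [hBc n hnK] at this
        linarith
      exact ⟨le_of_lt hres, fun _ => hres⟩
  have := (claim K (le_refl _)).2 hK
  rw [hBK, hDK] at this
  exact lt_irrefl _ this

lemma EP_unique (hcont : ContinuousOn v (Set.Icc a b))
    (hconc : ConcaveOn ℝ (Set.Icc a b) v) {K : ℕ} {x c c' : ℝ}
    (hK : 1 ≤ K) (hxa : a ≤ x)
    (h1 : EP v b K x c) (h2 : EP v b K x c') : c = c' := by
  obtain ⟨B, hB0, hBK, hBs, hBc⟩ := h1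
  obtain ⟨D, hD0, hDK, hDs, hDc⟩ := h2
  by_contra hne
  rcases lt_or_gt_of_ne hne with h | h
  · exact EP_opt hcont hconc hK hxa D hD0 hDK (fun i hi => le_of_lt (hDs i hi)) hDc
      B hB0 hBK (fun i hi => le_of_lt (hBs i hi)) (fun i hi => by rw [hBc i hi]; exact h)
  · exact EP_opt hcont hconc hK hxa B hB0 hBK (fun i hi => le_of_lt (hBs i hi)) hBc
      D hD0 hDK (fun i hi => le_of_lt (hDs i hi)) (fun i hi => by rw [hDc i hi]; exact h)

end part

section main
variable {a b : ℝ} {v : ℝ → ℝ}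

set_option maxHeartbeats 3000000 in
lemma EP_exists (hab : a < b) (hcont : ContinuousOn v (Set.Icc a b))
    (hmono : StrictMonoOn v (Set.Icc a b))
    (hconc : ConcaveOn ℝ (Set.Icc a b) v) :
    ∀ K : ℕ, 1 ≤ K → ∀ x, a ≤ x → x < b → ∃ c, 0 ≤ c ∧ EP v b K x c := by
  intro K
  induction K with
  | zero => omega
  | succ K IH =>
    intro _ x hxa hxb
    by_cases hK0 : K = 0
    · -- base case : one piece
      subst hK0
      refine ⟨cgap v x b, cgap_nonneg hcont hxa (le_refl _) (le_of_lt hxb),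
        fun i => if i = 0 then x else b, by simp, by simp, ?_, ?_⟩
      · intro i hi
        have : i = 0 := by omega
        simp [this, hxb]
      · intro i hi
        have : i = 0 := by omega
        simp [this]
    · have hK1 : 1 ≤ K := by omega
      have IH' := IH hK1
      classical
      set G : ℝ → ℝ := fun y => if h : a ≤ y ∧ y < b then (IH' y h.1 h.2).choose else 0 with hGdef
      have hGnn : ∀ y, 0 ≤ G y := by
        intro y
        by_cases h : a ≤ y ∧ y < b
        · simp only [hGdef, dif_pos h]; exact (IH' y h.1 h.2).choose_spec.1
        · simp only [hGdef, dif_neg h]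
          exact le_refl _
      have hGEP : ∀ y, a ≤ y → y < b → EP v b K y (G y) := by
        intro y h1 h2
        simp only [hGdef, dif_pos (⟨h1, h2⟩ : a ≤ y ∧ y < b)]
        exact (IH' y h1 h2).choose_spec.2
      have hGb : G b = 0 := by
        simp only [hGdef]
        rw [dif_neg]
        rintro ⟨-, h⟩; exact lt_irrefl _ h
      -- G is antitone
      have hGanti : ∀ y y', a ≤ y → y ≤ y' → y' ≤ b → G y' ≤ G y := by
        intro y y' hya hyy' hy'b
        rcases eq_or_lt_of_le hy'b with heq | hy'b'
        · rw [heq, hGb]; exact hGnn y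
        have hyb : y < b := lt_of_le_of_lt hyy' hy'b'
        obtain ⟨B, hB0, hBK, hBs, hBc⟩ := hGEP y hya hyb
        by_contra hcc
        push_neg at hcc
        obtain ⟨B', hB'0, hB'K, hB's, hB'c⟩ := hGEP y' (le_trans hya hyy') hy'b'
        have hBb := part_bounds (b := b) hB0 hBK (fun i hi => le_of_lt (hBs i hi))
        refine EP_opt hcont hconc hK1 (le_trans hya hyy') B' hB'0 hB'K
          (fun i hi => le_of_lt (hB's i hi)) hB'c
          (fun i => max (B i) y')
          (by show max (B 0) y' = y'; rw [hB0]; exact max_eq_right hyy')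
          (by show max (B K) y' = b; rw [hBK]; exact max_eq_left (le_of_lt hy'b'))
          (fun i hi => max_le_max (le_of_lt (hBs i hi)) (le_refl _)) ?_
        intro i hi
        have hgle : cgap v (max (B i) y') (max (B (i + 1)) y') ≤ G y := by
          rcases le_total (B (i + 1)) y' with hc | hc
          · have h1 : max (B (i + 1)) y' = y' := max_eq_right hc
            have h2 : max (B i) y' = y' := max_eq_right (le_trans (le_of_lt (hBs i hi)) hc)
            rw [h1, h2, cgap_self]
            exact hGnn y
          · have h1 : max (B (i + 1)) y' = B (i + 1) := max_eq_left hc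
            rcases le_total y' (B i) with hc2 | hc2
            · have h2 : max (B i) y' = B i := max_eq_left hc2
              rw [h1, h2, hBc i hi]
            · have h2 : max (B i) y' = y' := max_eq_right hc2
              rw [h1, h2, ← hBc i hi]
              exact cgap_anti_left hcont hconc (le_trans hya (hBb i (by omega)).1) hc2
                (le_of_lt (hBs i hi)) (hBb (i+1) (by omega)).2
        linarith
      -- modulus for G
      have hGmod : ∀ y y', a ≤ y → y ≤ y' → y' ≤ b → G y ≤ G y' + (v y' - v y) := by
        intro y y' hya hyy' hy'b
        rcases eq_or_lt_of_le hyy' with rfl | hyy''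
        · simp
        rcases eq_or_lt_of_le hy'b with heq | hy'b'
        · rw [heq, hGb]
          obtain ⟨B, hB0, hBK, hBs, hBc⟩ := hGEP y hya (heq ▸ hyy'')
          have hBb := part_bounds (b := b) hB0 hBK (fun i hi => le_of_lt (hBs i hi))
          have hyB1 : y ≤ B 1 := by rw [← hB0]; exact le_of_lt (hBs 0 hK1)
          have h1 : cgap v (B 0) (B 1) = G y := hBc 0 hK1
          rw [hB0] at h1
          have h2 : cgap v y (B 1) ≤ v (B 1) - v y :=
            cgap_le_sub hcont hmono hya (hBb 1 hK1).2 hyB1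
          have h3 : v (B 1) ≤ v b := v_le hmono (le_trans hya hyB1) (le_refl _) (hBb 1 hK1).2
          linarith
        · by_contra hcc
          push_neg at hcc
          obtain ⟨B, hB0, hBK, hBs, hBc⟩ := hGEP y hya (lt_trans hyy'' hy'b')
          obtain ⟨B', hB'0, hB'K, hB's, hB'c⟩ := hGEP y' (le_trans hya hyy') hy'b'
          have hB'b := part_bounds (b := b) hB'0 hB'K (fun i hi => le_of_lt (hB's i hi))
          have hΔ : 0 ≤ v y' - v y := by
            have := v_le hmono hya hy'b hyy'
            linarith
          refine EP_opt hcont hconc hK1 hya B hB0 hBK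
            (fun i hi => le_of_lt (hBs i hi)) hBc
            (fun i => if i = 0 then y else B' i) (by simp) (by simp [hK0, hB'K]) ?_ ?_
          · intro i hi
            cases i with
            | zero =>
              show y ≤ B' 1
              have : y' ≤ B' 1 := by rw [← hB'0]; exact le_of_lt (hB's 0 hK1)
              linarith
            | succ n =>
              show B' (n+1) ≤ B' (n+2)
              exact le_of_lt (hB's (n+1) hi)
          · intro i hi
            cases i with
            | zero =>
              show cgap v y (B' 1) < G y
              have hy'B1 : y' ≤ B' 1 := by rw [← hB'0]; exact le_of_lt (hB's 0 hK1)
              have h1 : cgap v y (B' 1) ≤ cgap v y' (B' 1) + (v y' - v y) :=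
                cgap_left_mod hcont hmono hconc hya hyy' hy'B1 (hB'b 1 hK1).2
              have h2 : cgap v y' (B' 1) = G y' := by
                have := hB'c 0 hK1
                rwa [hB'0] at this
              rw [h2] at h1
              linarith
            | succ n =>
              show cgap v (B' (n+1)) (B' (n+2)) < G y
              rw [hB'c (n+1) hi]
              linarith
      -- intermediate value argument via sSup
      set A : Set ℝ := {y | y ∈ Set.Icc x b ∧ cgap v x y ≤ G y} with hAdef
      have hxA : x ∈ A := ⟨⟨le_refl _, le_of_lt hxb⟩, by rw [cgap_self]; exact hGnn x⟩
      have hAbdd : BddAbove A := ⟨b, fun y hy => hy.1.2⟩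
      set Y := sSup A with hYdef
      have hY1 : x ≤ Y := le_csSup hAbdd hxA
      have hY2 : Y ≤ b := csSup_le ⟨x, hxA⟩ (fun y hy => hy.1.2)
      have hvat : ∀ ε > 0, ∃ δ > 0, ∀ z ∈ Set.Icc a b, |z - Y| < δ → |v z - v Y| < ε := by
        have h1 : ContinuousWithinAt v (Set.Icc a b) Y := hcont Y ⟨le_trans hxa hY1, hY2⟩
        intro ε hε
        obtain ⟨δ, hδ, h3⟩ := Metric.continuousWithinAt_iff.1 h1 ε hε
        exact ⟨δ, hδ, fun z hz hdz => h3 hz (by simpa [Real.dist_eq] using hdz)⟩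
      have hclaim1 : cgap v x Y ≤ G Y := by
        by_contra hpos
        push_neg at hpos
        have hxY : x < Y := by
          rcases eq_or_lt_of_le hY1 with heq | h
          · exfalso
            rw [← heq, cgap_self] at hpos
            exact absurd hpos (not_lt.2 (hGnn x))
          · exact h
        have hε : 0 < cgap v x Y - G Y := by linarith
        set ε := cgap v x Y - G Y with hεdef
        obtain ⟨δ, hδ, hvδ⟩ := hvat (ε/4) (by linarith)
        set S := slp v x Y with hSdef
        have hS0 : 0 ≤ S := slp_nonneg hmono hxa hY2 hxY
        have hq0 : 0 < (ε/4)/(S+1) := by positivity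
        set δ' := min δ ((ε/4)/(S+1)) with hδ'def
        have hδ'0 : 0 < δ' := lt_min hδ hq0
        obtain ⟨y, hyA, hyY⟩ := exists_lt_of_lt_csSup ⟨x, hxA⟩ (show Y - δ' < Y by linarith)
        have hyY2 : y ≤ Y := le_csSup hAbdd hyA
        obtain ⟨⟨hyx, hyb⟩, hgy⟩ := hyA
        have h1 : cgap v x Y ≤ cgap v x y + S * (Y - y) :=
          cgap_right_mod hcont hmono hconc hxa hyx hyY2 hxY hY2
        have h2 : G y ≤ G Y + (v Y - v y) := hGmod y Y (le_trans hxa hyx) hyY2 hY2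
        have h3 : v Y - v y < ε/4 := by
          have hd : |y - Y| < δ := by
            rw [abs_sub_lt_iff]
            constructor <;> [linarith; linarith [min_le_left δ ((ε/4)/(S+1))]]
          have := hvδ y ⟨le_trans hxa hyx, hyb⟩ hd
          rw [abs_sub_lt_iff] at this
          linarith [this.2]
        have h4 : S * (Y - y) ≤ ε/4 := by
          have hYy : Y - y ≤ (ε/4)/(S+1) := by
            linarith [min_le_right δ ((ε/4)/(S+1))]
          have hm : S * (Y - y) ≤ S * ((ε/4)/(S+1)) :=
            mul_le_mul_of_nonneg_left hYy hS0
          have hfrac : (ε/4)/(S+1) * (S+1) = ε/4 := div_mul_cancel₀ _ (by positivity)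
          nlinarith [hq0]
        linarith
      have hclaim2 : G Y ≤ cgap v x Y := by
        by_contra hneg
        push_neg at hneg
        have hYb : Y < b := by
          rcases eq_or_lt_of_le hY2 with heq | h
          · exfalso
            have h0 : 0 ≤ cgap v x Y := cgap_nonneg hcont hxa hY2 hY1
            rw [heq, hGb] at hneg
            rw [heq] at h0
            linarith
          · exact h
        have hε : 0 < G Y - cgap v x Y := by linarith
        set ε := G Y - cgap v x Y with hεdef
        obtain ⟨δ, hδ, hvδ⟩ := hvat (ε/4) (by linarith)
        rcases eq_or_lt_of_le hY1 with heqxY | hxY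
        · -- x = Y
          set δ₂ := min δ (b - Y) with hδ₂def
          have hδ₂0 : 0 < δ₂ := lt_min hδ (by linarith)
          set y' := min b (Y + δ₂/2) with hy'def
          have hy'Y : Y < y' := lt_min hYb (by linarith)
          have hy'b : y' ≤ b := min_le_left _ _
          have hy'd : |y' - Y| < δ := by
            have h1 : y' ≤ Y + δ₂/2 := min_le_right _ _
            rw [abs_sub_lt_iff]
            constructor <;> [linarith [min_le_left δ (b - Y)]; linarith [min_le_left δ (b - Y)]]
          have hvy' : |v y' - v Y| < ε/4 :=
            hvδ y' ⟨le_trans hxa (by linarith), hy'b⟩ hy'd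
          rw [abs_sub_lt_iff] at hvy'
          have hr : cgap v x y' ≤ cgap v x Y + slp v x y' * (y' - Y) :=
            cgap_right_mod hcont hmono hconc hxa hY1 (le_of_lt hy'Y)
              (by rw [heqxY]; exact hy'Y) hy'b
          have hT1 : slp v x y' * (y' - Y) < ε/4 := by
            have hxy' : x < y' := by rw [heqxY]; exact hy'Y
            have := slp_mul (v := v) hxy'
            have hYx : Y = x := heqxY.symm
            rw [hYx]
            rw [hYx] at hvy'
            linarith [this, hvy'.1]
          have hg : G Y ≤ G y' + (v y' - v Y) := hGmod Y y' (le_trans hxa hY1) (le_of_lt hy'Y) hy'b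
          have hy'A : y' ∈ A := by
            refine ⟨⟨by linarith, hy'b⟩, ?_⟩
            linarith [hvy'.1]
          have := le_csSup hAbdd hy'A
          linarith
        · -- x < Y
          set C := (v b - v x)/(Y - x) with hCdef
          have hC0 : 0 ≤ C := by
            have := v_le hmono hxa (le_refl b) (le_of_lt hxb)
            apply div_nonneg (by linarith) (by linarith)
          set δ₂ := min δ (min (b - Y) ((ε/4)/(C+1))) with hδ₂def
          have hδ₂0 : 0 < δ₂ := by
            apply lt_min hδ (lt_min (by linarith) (by positivity))
          set y' := min b (Y + δ₂/2) with hy'def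
          have hy'Y : Y < y' := lt_min hYb (by linarith)
          have hy'b : y' ≤ b := min_le_left _ _
          have hy'd : |y' - Y| < δ := by
            have h1 : y' ≤ Y + δ₂/2 := min_le_right _ _
            have h2 : δ₂ ≤ δ := min_le_left _ _
            rw [abs_sub_lt_iff]
            constructor <;> linarith
          have hvy' : |v y' - v Y| < ε/4 :=
            hvδ y' ⟨le_trans hxa (by linarith), hy'b⟩ hy'd
          rw [abs_sub_lt_iff] at hvy'
          have hr : cgap v x y' ≤ cgap v x Y + slp v x y' * (y' - Y) :=
            cgap_right_mod hcont hmono hconc hxa hY1 (le_of_lt hy'Y)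
              (lt_of_lt_of_le hxY (le_of_lt hy'Y)) hy'b
          have hT1 : slp v x y' * (y' - Y) ≤ ε/4 := by
            have hxy' : x < y' := lt_trans hxY hy'Y
            have hvb : v y' ≤ v b := v_le hmono (by linarith) (le_refl _) hy'b
            have hvbx : 0 ≤ v b - v x := by
              have := v_le hmono hxa (le_refl b) (le_of_lt hxb)
              linarith
            have hslpC : slp v x y' ≤ C := by
              show (v y' - v x)/(y' - x) ≤ (v b - v x)/(Y - x)
              apply div_le_div₀ hvbx (by linarith) (by linarith) (by linarith)
            have hq : y' - Y ≤ (ε/4)/(C+1) := by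
              have h1 : y' ≤ Y + δ₂/2 := min_le_right _ _
              have h2 : δ₂ ≤ (ε/4)/(C+1) := le_trans (min_le_right _ _) (min_le_right _ _)
              have hq0 : 0 < (ε/4)/(C+1) := by positivity
              linarith
            have hs0 : 0 ≤ slp v x y' := slp_nonneg hmono hxa hy'b hxy'
            have hm1 : slp v x y' * (y' - Y) ≤ C * (y' - Y) :=
              mul_le_mul_of_nonneg_right hslpC (by linarith)
            have hm2 : C * (y' - Y) ≤ C * ((ε/4)/(C+1)) :=
              mul_le_mul_of_nonneg_left hq hC0
            have hfrac : (ε/4)/(C+1) * (C+1) = ε/4 := div_mul_cancel₀ _ (by positivity)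
            have hq0' : 0 ≤ (ε/4)/(C+1) := by positivity
            linarith
          have hg : G Y ≤ G y' + (v y' - v Y) := hGmod Y y' (le_trans hxa hY1) (le_of_lt hy'Y) hy'b
          have hy'A : y' ∈ A := by
            refine ⟨⟨by linarith, hy'b⟩, ?_⟩
            linarith [hvy'.1]
          have := le_csSup hAbdd hy'A
          linarith
      have hGYeq : G Y = cgap v x Y := le_antisymm hclaim2 hclaim1
      have hc0 : 0 ≤ cgap v x Y := cgap_nonneg hcont hxa hY2 hY1
      clear_value G A Y
      rcases eq_or_lt_of_le hY2 with heqYb | hYb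
      · -- Y = b : everything affine, uniform partition
        have hc00 : cgap v x b = 0 := by
          have h1 := hclaim1
          rw [heqYb, hGb] at h1
          have h2 := hc0
          rw [heqYb] at h2
          linarith
        have hpos : (0:ℝ) < (K:ℝ) + 1 := by positivity
        have hbx : (0:ℝ) < b - x := by linarith
        have hxle : ∀ j : ℕ, 0 ≤ (b - x) * (j:ℝ) / ((K:ℝ)+1) := by
          intro j; positivity
        have hble : ∀ j : ℕ, (j:ℝ) ≤ (K:ℝ)+1 → x + (b - x) * (j:ℝ) / ((K:ℝ)+1) ≤ b := by
          intro j hj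
          have h1 : (b - x) * (j:ℝ) / ((K:ℝ)+1) ≤ b - x := by
            rw [div_le_iff₀ hpos]
            nlinarith
          linarith
        clear hGanti hGmod hclaim1 hclaim2 hGYeq hvat hGnn hGb hxA hAbdd hGEP hc0
        clear heqYb hY1 hY2 hYdef hAdef hGdef
        clear Y A G
        refine ⟨0, le_refl _, fun i => x + (b - x) * (i:ℝ) / ((K:ℝ)+1), by simp, ?_, ?_, ?_⟩
        · show x + (b - x) * ((K+1:ℕ):ℝ) / ((K:ℝ)+1) = b
          push_cast
          field_simp
          ring
        · intro i hi
          show x + (b - x) * (i:ℝ) / ((K:ℝ)+1) < x + (b - x) * ((i+1:ℕ):ℝ) / ((K:ℝ)+1)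
          have hc : ((i+1:ℕ):ℝ) = (i:ℝ)+1 := by push_cast; ring
          rw [hc]
          have h1 : (b - x) * (i:ℝ) < (b - x) * ((i:ℝ)+1) := by
            have : (i:ℝ) < (i:ℝ)+1 := by linarith
            exact mul_lt_mul_of_pos_left this hbx
          have h2 : (b - x) * (i:ℝ) / ((K:ℝ)+1) < (b - x) * ((i:ℝ)+1) / ((K:ℝ)+1) :=
            div_lt_div_of_pos_right h1 hpos
          linarith
        · intro i hi
          show cgap v (x + (b - x) * (i:ℝ) / ((K:ℝ)+1)) (x + (b - x) * ((i+1:ℕ):ℝ) / ((K:ℝ)+1)) = 0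
          have hc : ((i+1:ℕ):ℝ) = (i:ℝ)+1 := by push_cast; ring
          rw [hc]
          have hiK : ((i:ℝ)+1) ≤ (K:ℝ)+1 := by
            have : (i:ℝ) ≤ (K:ℝ) := by exact_mod_cast Nat.lt_succ_iff.1 hi
            linarith
          have h1 : (b - x) * (i:ℝ) ≤ (b - x) * ((i:ℝ)+1) := by
            have : (i:ℝ) ≤ (i:ℝ)+1 := by linarith
            exact mul_le_mul_of_nonneg_left this (le_of_lt hbx)
          have h2 : (b - x) * (i:ℝ) / ((K:ℝ)+1) ≤ (b - x) * ((i:ℝ)+1) / ((K:ℝ)+1) :=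
            div_le_div_of_nonneg_right h1 (le_of_lt hpos)
          have h3 : x + (b - x) * ((i:ℝ)+1) / ((K:ℝ)+1) ≤ b := by
            have h4 : (b - x) * ((i:ℝ)+1) / ((K:ℝ)+1) ≤ b - x := by
              rw [div_le_iff₀ hpos]
              nlinarith
            linarith
          exact cgap_zero_sub hcont hconc hxa (by linarith [hxle i]) (by linarith) h3
            (le_refl b) hc00
      · rcases eq_or_lt_of_le hY1 with heqxY | hxY
        · -- Y = x : G x = 0, split the first piece of a K-partition
          have hGx0 : G x = 0 := by
            have h1 := hGYeq
            rw [← heqxY, cgap_self] at h1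
            exact h1
          obtain ⟨B, hB0, hBK, hBs, hBc⟩ := hGEP x hxa hxb
          have hBb := part_bounds (b := b) hB0 hBK (fun i hi => le_of_lt (hBs i hi))
          have hB1 : x < B 1 := by rw [← hB0]; exact hBs 0 hK1
          have hc01 : cgap v x (B 1) = 0 := by
            have h1 := hBc 0 hK1
            rw [hB0, hGx0] at h1
            exact h1
          refine ⟨0, le_refl _,
            fun i => if i = 0 then x else if i = 1 then (x + B 1)/2 else B (i - 1),
            by simp, ?_, ?_, ?_⟩
          · have h1 : K + 1 ≠ 0 := by omega
            have h2 : K + 1 ≠ 1 := by omega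
            simp only [if_neg h1, if_neg h2]
            simpa using hBK
          · intro i hi
            rcases i with _ | _ | n
            · show x < (x + B 1)/2
              linarith
            · show (x + B 1)/2 < B 1
              linarith
            · show B (n+1) < B (n+2)
              exact hBs (n+1) (by omega)
          · intro i hi
            rcases i with _ | _ | n
            · show cgap v x ((x + B 1)/2) = 0
              exact cgap_zero_sub hcont hconc hxa (le_refl x) (by linarith) (by linarith)
                (hBb 1 hK1).2 hc01
            · show cgap v ((x + B 1)/2) (B 1) = 0
              exact cgap_zero_sub hcont hconc hxa (by linarith) (by linarith) (le_refl _)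
                (hBb 1 hK1).2 hc01
            · show cgap v (B (n+1)) (B (n+2)) = 0
              have h1 := hBc (n+1) (by omega)
              rw [hGx0] at h1
              exact h1
        · -- x < Y < b : prepend the piece [x, Y]
          obtain ⟨B, hB0, hBK, hBs, hBc⟩ := hGEP Y (le_trans hxa hY1) hYb
          refine ⟨cgap v x Y, hc0, fun i => if i = 0 then x else B (i - 1), by simp, ?_, ?_, ?_⟩
          · have h1 : K + 1 ≠ 0 := by omega
            simp only [if_neg h1]
            simpa using hBK
          · intro i hi
            rcases i with _ | n
            · show x < B 0
              rw [hB0]; exact hxY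
            · show B n < B (n+1)
              exact hBs n (by omega)
          · intro i hi
            rcases i with _ | n
            · show cgap v x (B 0) = cgap v x Y
              rw [hB0]
            · show cgap v (B n) (B (n+1)) = cgap v x Y
              rw [hBc n (by omega), hGYeq]

end main

section tangent
variable {a b : ℝ} {v : ℝ → ℝ}

/-- tangent line of a concave function dominates it -/
lemma tangent_dom (hconc : ConcaveOn ℝ (Set.Icc a b) v)
    (hdiff : ∀ t ∈ Set.Ioo a b, DifferentiableAt ℝ v t) {t τ : ℝ}
    (ht : t ∈ Set.Ioo a b) (hτ : τ ∈ Set.Icc a b) :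
    v τ ≤ deriv v t * (τ - t) + v t := by
  have htI : t ∈ Set.Icc a b := Set.Ioo_subset_Icc_self ht
  have hder := hdiff t ht
  rcases lt_trichotomy τ t with h | h | h
  · have h1 : deriv v t ≤ slope v τ t := hconc.deriv_le_slope hτ htI h hder
    rw [slope_def_field] at h1
    have h2 : (0:ℝ) < t - τ := by linarith
    rw [le_div_iff₀ h2] at h1
    nlinarith
  · rw [h]; simp
  · have h1 : slope v t τ ≤ deriv v t := hconc.slope_le_deriv htI hτ h hder
    rw [slope_def_field] at h1
    have h2 : (0:ℝ) < τ - t := by linarith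
    rw [div_le_iff₀ h2] at h1
    nlinarith

lemma deriv_anti (hconc : ConcaveOn ℝ (Set.Icc a b) v)
    (hdiff : ∀ t ∈ Set.Ioo a b, DifferentiableAt ℝ v t) {t t' : ℝ}
    (ht : t ∈ Set.Ioo a b) (ht' : t' ∈ Set.Ioo a b) (h : t ≤ t') :
    deriv v t' ≤ deriv v t :=
  (hconc.subset Set.Ioo_subset_Icc_self (convex_Ioo a b)).antitoneOn_deriv hdiff ht ht' h

/-- for x left of both tangent points, the farther tangent line is above -/
lemma line_cmp_right (hconc : ConcaveOn ℝ (Set.Icc a b) v)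
    (hdiff : ∀ t ∈ Set.Ioo a b, DifferentiableAt ℝ v t) {t t' x : ℝ}
    (ht : t ∈ Set.Ioo a b) (ht' : t' ∈ Set.Ioo a b) (h : t ≤ t') (hx : x ≤ t) :
    deriv v t * (x - t) + v t ≤ deriv v t' * (x - t') + v t' := by
  have hdom : v t ≤ deriv v t' * (t - t') + v t' :=
    tangent_dom hconc hdiff ht' (Set.Ioo_subset_Icc_self ht)
  have hder : deriv v t' ≤ deriv v t := deriv_anti hconc hdiff ht ht' h
  nlinarith [mul_nonneg (sub_nonneg.2 hder) (sub_nonneg.2 hx)]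

/-- for x right of both tangent points, the farther tangent line is above -/
lemma line_cmp_left (hconc : ConcaveOn ℝ (Set.Icc a b) v)
    (hdiff : ∀ t ∈ Set.Ioo a b, DifferentiableAt ℝ v t) {t t' x : ℝ}
    (ht : t ∈ Set.Ioo a b) (ht' : t' ∈ Set.Ioo a b) (h : t ≤ t') (hx : t' ≤ x) :
    deriv v t' * (x - t') + v t' ≤ deriv v t * (x - t) + v t := by
  have hdom : v t' ≤ deriv v t * (t' - t) + v t :=
    tangent_dom hconc hdiff ht (Set.Ioo_subset_Icc_self ht')
  have hder : deriv v t' ≤ deriv v t := deriv_anti hconc hdiff ht ht' h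
  nlinarith [mul_nonneg (sub_nonneg.2 hder) (sub_nonneg.2 hx)]

/-- the tangent line with chord slope has gap exactly cgap at both endpoints -/
lemma tangent_gap (hcont : ContinuousOn v (Set.Icc a b))
    (hconc : ConcaveOn ℝ (Set.Icc a b) v)
    (hdiff : ∀ t ∈ Set.Ioo a b, DifferentiableAt ℝ v t) {α β w : ℝ}
    (hα : a ≤ α) (hβ : β ≤ b) (hαβ : α < β) (hw : w ∈ Set.Ioo α β)
    (hd : deriv v w = slp v α β) :
    deriv v w * (α - w) + v w = v α + cgap v α β ∧
    deriv v w * (β - w) + v w = v β + cgap v α β := by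
  have hwI : w ∈ Set.Ioo a b :=
    ⟨lt_of_le_of_lt hα hw.1, lt_of_lt_of_le hw.2 hβ⟩
  have hkey : cgap v α β = v w - chd v α β w := by
    apply le_antisymm
    · apply cgap_le (le_of_lt hαβ)
      intro z hz
      have hdom : v z ≤ deriv v w * (z - w) + v w :=
        tangent_dom hconc hdiff hwI ⟨le_trans hα hz.1, le_trans hz.2 hβ⟩
      have he : deriv v w * (z - w) + v w - chd v α β z = v w - chd v α β w := by
        rw [hd]; simp only [chd]; ring
      linarith
    · exact le_cgap hcont hα hβ ⟨le_of_lt hw.1, le_of_lt hw.2⟩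
  constructor
  · have h1 : deriv v w * (α - w) + v w - chd v α β α = v w - chd v α β w := by
      rw [hd]; simp only [chd]; ring
    rw [chd_left] at h1
    rw [hkey]; linarith
  · have h1 : deriv v w * (β - w) + v w - chd v α β β = v w - chd v α β w := by
      rw [hd]; simp only [chd]; ring
    rw [chd_right hαβ] at h1
    rw [hkey]; linarith

end tangent

theorem stmt_18 (a b : ℝ) (hab : a < b) (v : ℝ → ℝ)
    (hcont : ContinuousOn v (Set.Icc a b))
    (hmono : StrictMonoOn v (Set.Icc a b))
    (hconc : ConcaveOn ℝ (Set.Icc a b) v)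
    (hdiff : ∀ t ∈ Set.Ioo a b, DifferentiableAt ℝ v t) :
    ∀ K : ℕ, 1 ≤ K →
      ∃ (t : ℕ → ℝ) (B : ℕ → ℝ),
        -- tangency points lie in the open interval
        (∀ s, s < K → t s ∈ Set.Ioo a b) ∧
        -- end points and break points: B 0 = a < B 1 < … < B (K-1) < B K = b
        B 0 = a ∧ B K = b ∧ (∀ i, i < K → B i < B (i + 1)) ∧
        -- each piece is the tangent line of v at t s, and their pointwise
        -- minimum h dominates v on [a, b]
        (∀ τ ∈ Set.Icc a b,
          v τ ≤ ⨅ s : Fin K, (deriv v (t s) * (τ - t s) + v (t s))) ∧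
        -- consecutive pieces intersect exactly at the break points
        (∀ s, s + 1 < K →
          deriv v (t s) * (B (s + 1) - t s) + v (t s)
            = deriv v (t (s + 1)) * (B (s + 1) - t (s + 1)) + v (t (s + 1))) ∧
        -- the gaps at B 0, …, B K are all equal
        (∀ i ≤ K, ∀ j ≤ K,
          (⨅ s : Fin K, (deriv v (t s) * (B i - t s) + v (t s))) - v (B i)
            = (⨅ s : Fin K, (deriv v (t s) * (B j - t s) + v (t s))) - v (B j)) := by
  intro K hK
  haveI : Nonempty (Fin K) := ⟨⟨0, hK⟩⟩
  obtain ⟨c, hc0, B, hB0, hBK, hBs, hBc⟩ :=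
    EP_exists hab hcont hmono hconc K hK a (le_refl a) hab
  have hBb := part_bounds (b := b) hB0 hBK (fun i hi => le_of_lt (hBs i hi))
  have hBmono := part_mono (B := B) (K := K) (fun i hi => le_of_lt (hBs i hi))
  have hMVT : ∀ i, i < K →
      ∃ w ∈ Set.Ioo (B i) (B (i+1)), deriv v w = slp v (B i) (B (i+1)) := by
    intro i hi
    have h1 : B i < B (i+1) := hBs i hi
    have h2 : ContinuousOn v (Set.Icc (B i) (B (i+1))) :=
      hcont.mono (Set.Icc_subset_Icc (hBb i (by omega)).1 (hBb (i+1) (by omega)).2)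
    have h3 : DifferentiableOn ℝ v (Set.Ioo (B i) (B (i+1))) := fun z hz =>
      (hdiff z ⟨lt_of_le_of_lt (hBb i (by omega)).1 hz.1,
        lt_of_lt_of_le hz.2 (hBb (i+1) (by omega)).2⟩).differentiableWithinAt
    exact exists_deriv_eq_slope v h1 h2 h3
  classical
  set t : ℕ → ℝ := fun i => if h : i < K then (hMVT i h).choose else (a+b)/2 with htdef
  have htspec : ∀ i, ∀ h : i < K, t i ∈ Set.Ioo (B i) (B (i+1)) ∧
      deriv v (t i) = slp v (B i) (B (i+1)) := by
    intro i h
    simp only [htdef, dif_pos h]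
    exact ⟨(hMVT i h).choose_spec.1, (hMVT i h).choose_spec.2⟩
  clear_value t
  have htIoo : ∀ i, i < K → t i ∈ Set.Ioo a b := fun i h =>
    ⟨lt_of_le_of_lt (hBb i (by omega)).1 ((htspec i h).1).1,
      lt_of_lt_of_le ((htspec i h).1).2 (hBb (i+1) (by omega)).2⟩
  have hgapId : ∀ i, ∀ _ : i < K,
      deriv v (t i) * (B i - t i) + v (t i) = v (B i) + c ∧
      deriv v (t i) * (B (i+1) - t i) + v (t i) = v (B (i+1)) + c := by
    intro i h
    have := tangent_gap hcont hconc hdiff (hBb i (by omega)).1 (hBb (i+1) (by omega)).2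
      (hBs i h) (htspec i h).1 (htspec i h).2
    rw [hBc i h] at this
    exact this
  have htmono : ∀ i j, i ≤ j → j < K → t i ≤ t j := by
    intro i j hij hj
    rcases eq_or_lt_of_le hij with rfl | h
    · exact le_refl _
    · have h1 : t i < B (i+1) := (htspec i (by omega)).1.2
      have h2 : B (i+1) ≤ B j := hBmono (i+1) j (by omega) (by omega)
      have h3 : B j < t j := (htspec j hj).1.1
      linarith
  have hLB : ∀ j, j ≤ K → ∀ s, s < K →
      v (B j) + c ≤ deriv v (t s) * (B j - t s) + v (t s) := by
    intro j hj s hs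
    rcases le_or_gt j s with hjs | hsj
    · have hj' : j < K := lt_of_le_of_lt hjs hs
      have h1 : B j < t j := (htspec j hj').1.1
      have h2 : t j ≤ t s := htmono j s hjs hs
      have h3 := line_cmp_right hconc hdiff (htIoo j hj') (htIoo s hs) h2 (le_of_lt h1)
      rw [(hgapId j hj').1] at h3
      exact h3
    · have hj1 : j - 1 < K := by omega
      have hsj1 : s ≤ j - 1 := by omega
      have hjj : j - 1 + 1 = j := by omega
      have h1 : t (j-1) < B j := by
        have := (htspec (j-1) hj1).1.2
        rwa [hjj] at this
      have h2 : t s ≤ t (j-1) := htmono s (j-1) hsj1 hj1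
      have h3 := line_cmp_left hconc hdiff (htIoo s hs) (htIoo (j-1) hj1) h2 (le_of_lt h1)
      have h4 := (hgapId (j-1) hj1).2
      rw [hjj] at h4
      rw [h4] at h3
      exact h3
  have hInf : ∀ j, j ≤ K →
      (⨅ s : Fin K, (deriv v (t s) * (B j - t s) + v (t s))) = v (B j) + c := by
    intro j hj
    have hbddB : BddBelow (Set.range fun s : Fin K =>
        deriv v (t s) * (B j - t s) + v (t s)) :=
      Set.Finite.bddBelow (Set.finite_range _)
    apply le_antisymm
    · rcases lt_or_ge j K with hjK | hjK
      · calc (⨅ s : Fin K, (deriv v (t s) * (B j - t s) + v (t s)))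
            ≤ deriv v (t j) * (B j - t j) + v (t j) := ciInf_le hbddB ⟨j, hjK⟩
          _ = v (B j) + c := (hgapId j hjK).1
      · have hjeq : j = K := le_antisymm hj hjK
        have hj1 : K - 1 < K := by omega
        have hjj : K - 1 + 1 = K := by omega
        have h4 := (hgapId (K-1) hj1).2
        rw [hjj] at h4
        calc (⨅ s : Fin K, (deriv v (t s) * (B j - t s) + v (t s)))
            ≤ deriv v (t (K-1)) * (B j - t (K-1)) + v (t (K-1)) := ciInf_le hbddB ⟨K-1, hj1⟩
          _ = v (B j) + c := by rw [hjeq]; exact h4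
    · exact le_ciInf fun s => hLB j hj s s.2
  refine ⟨t, B, htIoo, hB0, hBK, hBs, ?_, ?_, ?_⟩
  · intro τ hτ
    exact le_ciInf fun s => tangent_dom hconc hdiff (htIoo s s.2) hτ
  · intro s hs
    have h1 := (hgapId s (by omega)).2
    have h2 := (hgapId (s+1) hs).1
    rw [h1, h2]
  · intro i hi j hj
    rw [hInf i hi, hInf j hj]
    ring
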